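/- arXiv:1111.5029 — 4 statements merged into one kernel-verified Lean document; each statement's English description precedes it below -/
import Mathlib

section
/- Let S : M_d(ℝ) → M_d(ℝ) be defined by S(G) = (Gᵀ·G)/(1 + Tr(Gᵀ·G)). Then for every G ∈ M_d(ℝ) with G ≠ 0 and every direction H ∈ M_d(ℝ), the Fréchet derivative satisfies ‖DS(G)[H]‖ ≤ (2(1 + √d)/‖G‖)·‖H‖. -/
open Matrix

-- Matrices are regarded as a normed space with the Frobenius norm.
attribute [local instance] Matrix.frobeniusNormedAddCommGroup Matrix.frobeniusNormedSpace

/-- The PSM strain measure `S(G) = (Gᵀ·G)/(1 + Tr(Gᵀ·G))`. -/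
noncomputable def psmStrain {d : ℕ} (G : Matrix (Fin d) (Fin d) ℝ) :
    Matrix (Fin d) (Fin d) ℝ :=
  (1 + (Gᵀ * G).trace)⁻¹ • (Gᵀ * G)

private lemma my_trace_sq (d : ℕ) (A : Matrix (Fin d) (Fin d) ℝ) :
    (Aᵀ * A).trace = ‖A‖ ^ 2 := by
  have h : ‖A‖ ^ 2 = ∑ i, ∑ j, (A i j) ^ 2 := by
    rw [Matrix.frobenius_norm_def, ← Real.rpow_natCast _ 2,
      ← Real.rpow_mul (by positivity)]
    norm_num
  rw [h, Matrix.trace, Finset.sum_comm]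
  simp [Matrix.diag, Matrix.mul_apply, sq]

private lemma my_cs (d : ℕ) (A B : Matrix (Fin d) (Fin d) ℝ) :
    |(Aᵀ * B).trace| ≤ ‖A‖ * ‖B‖ := by
  have h1 : (Aᵀ * B).trace = ∑ p : Fin d × Fin d, A p.1 p.2 * B p.1 p.2 := by
    rw [Fintype.sum_prod_type, Matrix.trace, Finset.sum_comm]
    simp [Matrix.diag, Matrix.mul_apply]
  have h2 := Finset.sum_mul_sq_le_sq_mul_sq Finset.univ
    (fun p : Fin d × Fin d => A p.1 p.2) (fun p : Fin d × Fin d => B p.1 p.2)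
  have hA : ∑ p : Fin d × Fin d, (A p.1 p.2) ^ 2 = ‖A‖ ^ 2 := by
    rw [← my_trace_sq, Fintype.sum_prod_type, Matrix.trace, Finset.sum_comm]
    simp [Matrix.diag, Matrix.mul_apply, sq]
  have hB : ∑ p : Fin d × Fin d, (B p.1 p.2) ^ 2 = ‖B‖ ^ 2 := by
    rw [← my_trace_sq, Fintype.sum_prod_type, Matrix.trace, Finset.sum_comm]
    simp [Matrix.diag, Matrix.mul_apply, sq]
  rw [hA, hB, ← h1] at h2
  nlinarith [abs_nonneg ((Aᵀ * B).trace), sq_abs ((Aᵀ * B).trace),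
    norm_nonneg A, norm_nonneg B, mul_nonneg (norm_nonneg A) (norm_nonneg B)]

set_option maxHeartbeats 1000000 in
/-- for every `G ≠ 0` and every direction `H`, the Fréchet derivative of
the PSM strain measure satisfies `‖DS(G)[H]‖ ≤ (2(1 + √d)/‖G‖)·‖H‖`
(Frobenius norms). -/
theorem psm_strain_fderiv_bound (d : ℕ) (G H : Matrix (Fin d) (Fin d) ℝ)
    (hG : G ≠ 0) :
    ‖fderiv ℝ (psmStrain (d := d)) G H‖ ≤
      2 * (1 + Real.sqrt d) / ‖G‖ * ‖H‖ := by
  rcases Nat.eq_zero_or_pos d with hd | hd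
  · subst hd
    exact absurd (Subsingleton.elim G 0) hG
  have hnpos : 0 < ‖G‖ := norm_pos_iff.mpr hG
  have hcpos : (0 : ℝ) < 1 + (Gᵀ * G).trace := by
    rw [my_trace_sq]; positivity
  have hc : (1 : ℝ) + (Gᵀ * G).trace ≠ 0 := ne_of_gt hcpos
  letI : NormedRing (Matrix (Fin d) (Fin d) ℝ) := Matrix.frobeniusNormedRing
  letI : NormedAlgebra ℝ (Matrix (Fin d) (Fin d) ℝ) := Matrix.frobeniusNormedAlgebra
  set T : Matrix (Fin d) (Fin d) ℝ →L[ℝ] Matrix (Fin d) (Fin d) ℝ :=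
    LinearMap.toContinuousLinearMap
      (Matrix.transposeLinearEquiv (Fin d) (Fin d) ℝ ℝ).toLinearMap with hTdef
  set tr : Matrix (Fin d) (Fin d) ℝ →L[ℝ] ℝ :=
    LinearMap.toContinuousLinearMap (Matrix.traceLinearMap (Fin d) ℝ ℝ) with htrdef
  have hT : HasFDerivAt (fun A : Matrix (Fin d) (Fin d) ℝ => Aᵀ) T G := T.hasFDerivAt
  have hg := hT.mul' (hasFDerivAt_id G)
  have h1 := ((tr.hasFDerivAt.comp G hg).const_add (1:ℝ))
  have hinv := (hasFDerivAt_inv' (𝕜 := ℝ) hc).comp G h1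
  have hS := hinv.smul hg
  have hfd : HasFDerivAt (psmStrain (d := d)) _ G := hS
  rw [hfd.fderiv]
  simp only [ContinuousLinearMap.add_apply, ContinuousLinearMap.smul_apply,
    ContinuousLinearMap.smulRight_apply, ContinuousLinearMap.comp_apply,
    ContinuousLinearMap.coe_id', id_eq, ContinuousLinearMap.neg_apply,
    ContinuousLinearMap.mulLeftRight_apply, LinearMap.coe_toContinuousLinearMap',
    Matrix.traceLinearMap_apply, Matrix.transposeLinearEquiv_apply, LinearEquiv.coe_coe,
    smul_eq_mul, hTdef, htrdef, Function.comp_apply, Matrix.transposeAddEquiv_apply,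
    Matrix.traceLinearMap_apply, Matrix.transposeAddEquiv]
  -- goal: ‖c⁻¹ • (Gᵀ*H + Hᵀ*G) + -(c⁻¹ * (Gᵀ*H + Hᵀ*G).trace * c⁻¹) • (Gᵀ*G)‖ ≤ RHS
  set c : ℝ := 1 + (Gᵀ * G).trace with hcdef
  set τ : ℝ := (Gᵀ * H + Hᵀ * G).trace with hτdef
  have e1 : ‖Gᵀ * H + Hᵀ * G‖ ≤ 2 * ‖G‖ * ‖H‖ := by
    calc ‖Gᵀ * H + Hᵀ * G‖ ≤ ‖Gᵀ * H‖ + ‖Hᵀ * G‖ := norm_add_le _ _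
      _ ≤ ‖Gᵀ‖ * ‖H‖ + ‖Hᵀ‖ * ‖G‖ :=
          add_le_add (Matrix.frobenius_norm_mul _ _) (Matrix.frobenius_norm_mul _ _)
      _ = 2 * ‖G‖ * ‖H‖ := by
          rw [Matrix.frobenius_norm_transpose, Matrix.frobenius_norm_transpose]; ring
  have e2 : |τ| ≤ 2 * ‖G‖ * ‖H‖ := by
    have ht : (Hᵀ * G).trace = (Gᵀ * H).trace := by
      rw [← Matrix.trace_transpose (Hᵀ * G), Matrix.transpose_mul, Matrix.transpose_transpose]
    have : τ = 2 * (Gᵀ * H).trace := by rw [hτdef, Matrix.trace_add, ht]; ring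
    rw [this, abs_mul]
    have := my_cs d G H
    calc |(2 : ℝ)| * |(Gᵀ * H).trace| = 2 * |(Gᵀ * H).trace| := by norm_num
      _ ≤ 2 * (‖G‖ * ‖H‖) := by linarith
      _ = 2 * ‖G‖ * ‖H‖ := by ring
  have e3 : ‖Gᵀ * G‖ ≤ ‖G‖ ^ 2 := by
    calc ‖Gᵀ * G‖ ≤ ‖Gᵀ‖ * ‖G‖ := Matrix.frobenius_norm_mul _ _
      _ = ‖G‖ ^ 2 := by rw [Matrix.frobenius_norm_transpose]; ring
  have hsq : 1 ≤ Real.sqrt d := by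
    rw [show (1:ℝ) = Real.sqrt 1 by simp]
    exact Real.sqrt_le_sqrt (by exact_mod_cast hd)
  have hct : c = 1 + ‖G‖ ^ 2 := by rw [hcdef, my_trace_sq]
  have hcinv_pos : (0 : ℝ) < c⁻¹ := inv_pos.mpr hcpos
  calc ‖c⁻¹ • (Gᵀ * H + Hᵀ * G) + -(c⁻¹ * τ * c⁻¹) • (Gᵀ * G)‖
      ≤ ‖c⁻¹ • (Gᵀ * H + Hᵀ * G)‖ + ‖(-(c⁻¹ * τ * c⁻¹)) • (Gᵀ * G)‖ := norm_add_le _ _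
    _ = c⁻¹ * ‖Gᵀ * H + Hᵀ * G‖ + c⁻¹ * |τ| * c⁻¹ * ‖Gᵀ * G‖ := by
        rw [norm_smul, norm_smul, Real.norm_eq_abs, Real.norm_eq_abs, abs_neg, abs_mul, abs_mul,
          abs_of_pos hcinv_pos]
    _ ≤ c⁻¹ * (2 * ‖G‖ * ‖H‖) + c⁻¹ * (2 * ‖G‖ * ‖H‖) * c⁻¹ * ‖G‖ ^ 2 := by
        gcongr
    _ ≤ 2 * (1 + Real.sqrt d) / ‖G‖ * ‖H‖ := by
        have hg2c : ‖G‖ ^ 2 ≤ c := by rw [hct]; linarith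
        have hcinv_le : c⁻¹ * ‖G‖ ^ 2 ≤ 1 := by
          rw [inv_mul_eq_div]; exact (div_le_one hcpos).mpr hg2c
        have h2 : c⁻¹ ≤ (‖G‖ ^ 2)⁻¹ := by
          apply inv_anti₀ (by positivity) hg2c
        have k1 : c⁻¹ * (2 * ‖G‖ * ‖H‖) ≤ 2 * ‖H‖ / ‖G‖ := by
          calc c⁻¹ * (2 * ‖G‖ * ‖H‖) ≤ (‖G‖ ^ 2)⁻¹ * (2 * ‖G‖ * ‖H‖) :=
                mul_le_mul_of_nonneg_right h2 (by positivity)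
            _ = 2 * ‖H‖ / ‖G‖ := by field_simp
        have k2 : c⁻¹ * (2 * ‖G‖ * ‖H‖) * c⁻¹ * ‖G‖ ^ 2 ≤ 2 * ‖H‖ / ‖G‖ := by
          have hre : c⁻¹ * (2 * ‖G‖ * ‖H‖) * c⁻¹ * ‖G‖ ^ 2
              = (c⁻¹ * (2 * ‖G‖ * ‖H‖)) * (c⁻¹ * ‖G‖ ^ 2) := by ring
          rw [hre]
          calc (c⁻¹ * (2 * ‖G‖ * ‖H‖)) * (c⁻¹ * ‖G‖ ^ 2) ≤ (2 * ‖H‖ / ‖G‖) * 1 :=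
                mul_le_mul k1 hcinv_le (by positivity) (by positivity)
            _ = 2 * ‖H‖ / ‖G‖ := mul_one _
        have hhg : 0 ≤ ‖H‖ / ‖G‖ := by positivity
        have h4 : (4 : ℝ) ≤ 2 * (1 + Real.sqrt d) := by linarith
        calc c⁻¹ * (2 * ‖G‖ * ‖H‖) + c⁻¹ * (2 * ‖G‖ * ‖H‖) * c⁻¹ * ‖G‖ ^ 2
            ≤ 2 * ‖H‖ / ‖G‖ + 2 * ‖H‖ / ‖G‖ := add_le_add k1 k2
          _ ≤ 2 * (1 + Real.sqrt d) / ‖G‖ * ‖H‖ := by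
              have hk := mul_le_mul_of_nonneg_right h4 hhg
              have key : 2 * ‖H‖ / ‖G‖ + 2 * ‖H‖ / ‖G‖ = 4 * (‖H‖ / ‖G‖) := by ring
              have key2 : 2 * (1 + Real.sqrt d) / ‖G‖ * ‖H‖
                  = 2 * (1 + Real.sqrt d) * (‖H‖ / ‖G‖) := by ring
              rw [key, key2]
              exact hk
end

section
/- Suppose G : [0,∞) × ℝ × Ω → M_d(ℝ) is differentiable, satisfies ∂_t G + (1/𝔚𝔢) ∂_s G + (u·∇)G = G·∇u pointwise, and that B := Gᵀ·G is invertible at every point. Then the Cauchy–Green tensor C := B⁻¹ is differentiable and satisfies ∂_t C + (1/𝔚𝔢) ∂_s C + (u·∇)C = −C·(∇u)ᵀ − (∇u)·C pointwise on [0,∞) × ℝ × Ω. -/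
open Matrix

attribute [local instance] Matrix.linftyOpNormedRing Matrix.linftyOpNormedAlgebra

/-- The entry-evaluation continuous linear map on matrices. -/
noncomputable def entryCLM (d : ℕ) (i j : Fin d) : Matrix (Fin d) (Fin d) ℝ →L[ℝ] ℝ :=
  LinearMap.toContinuousLinearMap
    { toFun := fun A => A i j
      map_add' := fun _ _ => rfl
      map_smul' := fun _ _ => rfl }

@[simp] lemma entryCLM_apply (d : ℕ) (i j : Fin d) (A : Matrix (Fin d) (Fin d) ℝ) :
    entryCLM d i j A = A i j := rfl

/-- The identity, as a continuous linear equiv from `Matrix` to the pi type. -/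
noncomputable def matPiCLE (d : ℕ) : Matrix (Fin d) (Fin d) ℝ ≃L[ℝ] (Fin d → Fin d → ℝ) :=
  LinearEquiv.toContinuousLinearEquiv
    { toFun := fun A => A
      invFun := fun A => A
      map_add' := fun _ _ => rfl
      map_smul' := fun _ _ => rfl
      left_inv := fun _ => rfl
      right_inv := fun _ => rfl }

lemma sum_entry_identity (d : ℕ) (Gm N : Matrix (Fin d) (Fin d) ℝ) (a b : Fin d) :
    ∑ k : Fin d, (Gm k a * (Gm * N) k b + Gm k b * (Gm * N) k a)
      = ((Nᵀ * (Gmᵀ * Gm) + (Gmᵀ * Gm) * N)) a b := by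
  simp only [Matrix.add_apply, Matrix.mul_apply, Matrix.transpose_apply,
    Finset.mul_sum, Finset.sum_mul]
  rw [Finset.sum_add_distrib, add_comm]
  congr 1
  · rw [Finset.sum_comm]
    exact Finset.sum_congr rfl fun k _ => Finset.sum_congr rfl fun c _ => by ring
  · rw [Finset.sum_comm]
    exact Finset.sum_congr rfl fun k _ => Finset.sum_congr rfl fun c _ => by ring

/-- The velocity gradient matrix `(∇v)_{kj} = ∂v_j/∂y_k` of a vector field
`v : ℝᵈ → ℝᵈ` at a point `y`. -/
noncomputable def gradVF {d : ℕ} (v : (Fin d → ℝ) → (Fin d → ℝ)) (y : Fin d → ℝ) :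
    Matrix (Fin d) (Fin d) ℝ :=
  Matrix.of fun k j => fderiv ℝ (fun z => v z j) y (Pi.single k 1)

/-- if the deformation gradient `G(s,t,x)` is differentiable, satisfies
the transport equation `∂_t G + (1/𝔚𝔢) ∂_s G + (u·∇)G = G·∇u` pointwise on
`[0,∞) × ℝ × Ω`, and the Finger tensor `B := Gᵀ·G` is invertible at every point, then
the Cauchy–Green tensor `C := B⁻¹` is differentiable and satisfies
`∂_t C + (1/𝔚𝔢) ∂_s C + (u·∇)C = −C·(∇u)ᵀ − (∇u)·C` pointwise on `[0,∞) × ℝ × Ω`. -/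
theorem cauchy_green_tensor_transport (d : ℕ) (We : ℝ) (hWe : 0 < We)
    (Ω : Set (Fin d → ℝ)) (hΩ : IsOpen Ω)
    (u : ℝ → (Fin d → ℝ) → (Fin d → ℝ))
    (hu : ∀ (t : ℝ), ∀ x ∈ Ω, DifferentiableAt ℝ (u t) x)
    (G : ℝ → ℝ → (Fin d → ℝ) → Matrix (Fin d) (Fin d) ℝ)
    (hG : ∀ (s t : ℝ) (x : Fin d → ℝ), 0 ≤ s → x ∈ Ω → ∀ i j : Fin d,
      DifferentiableAt ℝ
        (fun q : ℝ × ℝ × (Fin d → ℝ) => G q.1 q.2.1 q.2.2 i j) (s, t, x))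
    (hPDE : ∀ (s t : ℝ) (x : Fin d → ℝ), 0 ≤ s → x ∈ Ω → ∀ i j : Fin d,
      deriv (fun t' => G s t' x i j) t
          + (1 / We) * deriv (fun s' => G s' t x i j) s
          + ∑ k : Fin d, u t x k *
              fderiv ℝ (fun x' => G s t x' i j) x (Pi.single k 1)
        = (G s t x * gradVF (u t) x) i j)
    (hinv : ∀ (s t : ℝ) (x : Fin d → ℝ), 0 ≤ s → x ∈ Ω →
      IsUnit ((G s t x)ᵀ * G s t x)) :
    ∀ (s t : ℝ) (x : Fin d → ℝ), 0 ≤ s → x ∈ Ω → ∀ i j : Fin d,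
      DifferentiableAt ℝ
          (fun q : ℝ × ℝ × (Fin d → ℝ) =>
            ((G q.1 q.2.1 q.2.2)ᵀ * G q.1 q.2.1 q.2.2)⁻¹ i j) (s, t, x) ∧
      deriv (fun t' => ((G s t' x)ᵀ * G s t' x)⁻¹ i j) t
          + (1 / We) * deriv (fun s' => ((G s' t x)ᵀ * G s' t x)⁻¹ i j) s
          + ∑ k : Fin d, u t x k *
              fderiv ℝ (fun x' => ((G s t x')ᵀ * G s t x')⁻¹ i j) x (Pi.single k 1)
        = (-(((G s t x)ᵀ * G s t x)⁻¹ * (gradVF (u t) x)ᵀ)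
            - gradVF (u t) x * ((G s t x)ᵀ * G s t x)⁻¹) i j := by
  intro s t x hs hx i j
  set Bf : ℝ × ℝ × (Fin d → ℝ) → Matrix (Fin d) (Fin d) ℝ :=
    fun q => (G q.1 q.2.1 q.2.2)ᵀ * G q.1 q.2.1 q.2.2 with hBf
  have hGd : ∀ a b : Fin d, DifferentiableAt ℝ
      (fun q : ℝ × ℝ × (Fin d → ℝ) => G q.1 q.2.1 q.2.2 a b) (s, t, x) :=
    fun a b => hG s t x hs hx a b
  -- derivatives of the entries of G
  set g : Fin d → Fin d → (ℝ × ℝ × (Fin d → ℝ)) →L[ℝ] ℝ :=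
    fun a b => fderiv ℝ (fun q : ℝ × ℝ × (Fin d → ℝ) => G q.1 q.2.1 q.2.2 a b) (s, t, x)
    with hgdef
  have hgfd : ∀ a b : Fin d, HasFDerivAt
      (fun q : ℝ × ℝ × (Fin d → ℝ) => G q.1 q.2.1 q.2.2 a b) (g a b) (s, t, x) :=
    fun a b => (hGd a b).hasFDerivAt
  -- differentiability of B = Gᵀ G, entrywise and as a matrix-valued map
  have hBde : ∀ a b : Fin d, DifferentiableAt ℝ (fun q => Bf q a b) (s, t, x) := by
    intro a b
    have h : (fun q : ℝ × ℝ × (Fin d → ℝ) => Bf q a b)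
        = fun q => ∑ k, G q.1 q.2.1 q.2.2 k a * G q.1 q.2.1 q.2.2 k b := by
      funext q; simp [hBf, Matrix.mul_apply, Matrix.transpose_apply]
    rw [h]
    exact DifferentiableAt.fun_sum fun k _ => (hGd k a).mul (hGd k b)
  have hBdiff : DifferentiableAt ℝ Bf (s, t, x) := by
    have h1 : DifferentiableAt ℝ (⇑(matPiCLE d) ∘ Bf) (s, t, x) := by
      rw [differentiableAt_pi]; intro a
      rw [differentiableAt_pi]; intro b
      exact hBde a b
    exact ((matPiCLE d).comp_differentiableAt_iff).mp h1
  set L := fderiv ℝ Bf (s, t, x) with hLdef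
  have hLfd : HasFDerivAt Bf L (s, t, x) := hBdiff.hasFDerivAt
  obtain ⟨U, hU⟩ := hinv s t x hs hx
  set C : Matrix (Fin d) (Fin d) ℝ := (↑U⁻¹ : Matrix (Fin d) (Fin d) ℝ) with hCdef
  set D : (ℝ × ℝ × (Fin d → ℝ)) →L[ℝ] Matrix (Fin d) (Fin d) ℝ :=
    (-ContinuousLinearMap.mulLeftRight ℝ _ C C).comp L with hDdef
  -- the inverse map is differentiable with derivative D
  have hIF : HasFDerivAt (fun q => Ring.inverse (Bf q)) D (s, t, x) := by
    have h1 : HasFDerivAt (Ring.inverse : Matrix (Fin d) (Fin d) ℝ → _)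
        (-ContinuousLinearMap.mulLeftRight ℝ _ C C) (Bf (s, t, x)) := by
      have h2 := hasFDerivAt_ringInverse (𝕜 := ℝ) U
      rwa [hU] at h2
    exact h1.comp (s, t, x) hLfd
  have hφ : HasFDerivAt (fun q => Ring.inverse (Bf q) i j)
      ((entryCLM d i j).comp D) (s, t, x) :=
    ((entryCLM d i j).hasFDerivAt).comp (s, t, x) hIF
  -- the combined transport direction
  set w0 : ℝ × ℝ × (Fin d → ℝ) :=
    ((0:ℝ), (1:ℝ), (0 : Fin d → ℝ)) + (1 / We) • ((1:ℝ), (0:ℝ), (0 : Fin d → ℝ))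
      + ∑ k : Fin d, u t x k • (((0:ℝ), (0:ℝ), Pi.single k 1) : ℝ × ℝ × (Fin d → ℝ)) with hw0
  have hγt : HasDerivAt (fun t' : ℝ => ((s, t', x) : ℝ × ℝ × (Fin d → ℝ)))
      ((0 : ℝ), (1 : ℝ), (0 : Fin d → ℝ)) t :=
    HasDerivAt.prodMk (hasDerivAt_const t s) (HasDerivAt.prodMk (hasDerivAt_id t) (hasDerivAt_const t x))
  have hγs : HasDerivAt (fun s' : ℝ => ((s', t, x) : ℝ × ℝ × (Fin d → ℝ)))
      ((1 : ℝ), (0 : ℝ), (0 : Fin d → ℝ)) s :=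
    HasDerivAt.prodMk (hasDerivAt_id s) (HasDerivAt.prodMk (hasDerivAt_const s t) (hasDerivAt_const s x))
  have hγx : HasFDerivAt (fun x' : Fin d → ℝ => ((s, t, x') : ℝ × ℝ × (Fin d → ℝ)))
      ((0 : (Fin d → ℝ) →L[ℝ] ℝ).prod ((0 : (Fin d → ℝ) →L[ℝ] ℝ).prod
        (ContinuousLinearMap.id ℝ (Fin d → ℝ)))) x :=
    HasFDerivAt.prodMk (hasFDerivAt_const s x) (HasFDerivAt.prodMk (hasFDerivAt_const t x) (hasFDerivAt_id x))
  -- the transport operator is evaluation of the total derivative at w0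
  have hOp : ∀ (f : ℝ × ℝ × (Fin d → ℝ) → ℝ) (ℓ : (ℝ × ℝ × (Fin d → ℝ)) →L[ℝ] ℝ),
      HasFDerivAt f ℓ (s, t, x) →
      deriv (fun t' => f (s, t', x)) t + (1 / We) * deriv (fun s' => f (s', t, x)) s
        + ∑ k : Fin d, u t x k * fderiv ℝ (fun x' => f (s, t, x')) x (Pi.single k 1)
      = ℓ w0 := by
    intro f ℓ hf
    have h1 : HasDerivAt (fun t' => f (s, t', x)) (ℓ ((0:ℝ), (1:ℝ), (0 : Fin d → ℝ))) t :=
      hf.comp_hasDerivAt t hγt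
    have h2 : HasDerivAt (fun s' => f (s', t, x)) (ℓ ((1:ℝ), (0:ℝ), (0 : Fin d → ℝ))) s :=
      hf.comp_hasDerivAt s hγs
    have h3 : HasFDerivAt (fun x' => f (s, t, x'))
        (ℓ.comp ((0 : (Fin d → ℝ) →L[ℝ] ℝ).prod ((0 : (Fin d → ℝ) →L[ℝ] ℝ).prod
          (ContinuousLinearMap.id ℝ (Fin d → ℝ))))) x :=
      hf.comp x hγx
    rw [h1.deriv, h2.deriv, h3.fderiv, hw0, map_add, map_add, _root_.map_smul, map_sum]
    simp only [_root_.map_smul, smul_eq_mul, ContinuousLinearMap.comp_apply,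
      ContinuousLinearMap.prod_apply, ContinuousLinearMap.zero_apply,
      ContinuousLinearMap.id_apply]
  -- the PDE for the entries of G, in terms of w0
  have hPDEg : ∀ a b : Fin d, g a b w0 = (G s t x * gradVF (u t) x) a b := by
    intro a b
    exact (hOp _ _ (hgfd a b)).symm.trans (hPDE s t x hs hx a b)
  -- the derivative of the entries of B by the product rule
  have hBsum : ∀ a b : Fin d, HasFDerivAt (fun q => Bf q a b)
      (∑ k : Fin d, (G s t x k a • g k b + G s t x k b • g k a)) (s, t, x) := by
    intro a b
    have heq : (fun q : ℝ × ℝ × (Fin d → ℝ) => Bf q a b)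
        = fun q => ∑ k, G q.1 q.2.1 q.2.2 k a * G q.1 q.2.1 q.2.2 k b := by
      funext q; simp [hBf, Matrix.mul_apply, Matrix.transpose_apply]
    rw [heq]
    exact HasFDerivAt.fun_sum fun k _ => ((hgfd k a).mul (hgfd k b))
  have hLe : ∀ (a b : Fin d) (w : ℝ × ℝ × (Fin d → ℝ)), (L w) a b
      = ∑ k : Fin d, (G s t x k a * g k b w + G s t x k b * g k a w) := by
    intro a b w
    have h1 : HasFDerivAt (fun q => Bf q a b) ((entryCLM d a b).comp L) (s, t, x) :=
      ((entryCLM d a b).hasFDerivAt).comp (s, t, x) hLfd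
    have h2 := h1.unique (hBsum a b)
    have h3 := congrArg (fun (m : (ℝ × ℝ × (Fin d → ℝ)) →L[ℝ] ℝ) => m w) h2
    simpa [ContinuousLinearMap.sum_apply, ContinuousLinearMap.add_apply,
      ContinuousLinearMap.smul_apply, smul_eq_mul] using h3
  -- the transported Finger tensor
  have hDBw : L w0 = (gradVF (u t) x)ᵀ * Bf (s, t, x) + Bf (s, t, x) * gradVF (u t) x := by
    ext a b
    rw [hLe a b w0]
    have h1 : ∀ k : Fin d, G s t x k a * g k b w0 + G s t x k b * g k a w0
        = G s t x k a * (G s t x * gradVF (u t) x) k b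
          + G s t x k b * (G s t x * gradVF (u t) x) k a := by
      intro k; rw [hPDEg k b, hPDEg k a]
    rw [Finset.sum_congr rfl fun k _ => h1 k]
    exact sum_entry_identity d (G s t x) (gradVF (u t) x) a b
  -- inverse facts
  have hU' : (↑U : Matrix (Fin d) (Fin d) ℝ) = Bf (s, t, x) := hU
  have hCB : C * Bf (s, t, x) = 1 := by rw [← hU', hCdef]; exact U.inv_mul
  have hBC : Bf (s, t, x) * C = 1 := by rw [← hU', hCdef]; exact U.mul_inv
  have hRI : Ring.inverse ((G s t x)ᵀ * G s t x) = C := by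
    rw [← hU, hCdef, Ring.inverse_unit]
  have hInvEq : (fun q : ℝ × ℝ × (Fin d → ℝ) =>
      ((G q.1 q.2.1 q.2.2)ᵀ * G q.1 q.2.1 q.2.2)⁻¹)
      = fun q => Ring.inverse (Bf q) := by
    funext q; rw [Matrix.nonsing_inv_eq_ringInverse]
  constructor
  · -- differentiability
    have h := hφ.differentiableAt
    have heq : (fun q : ℝ × ℝ × (Fin d → ℝ) =>
        ((G q.1 q.2.1 q.2.2)ᵀ * G q.1 q.2.1 q.2.2)⁻¹ i j)
        = fun q => Ring.inverse (Bf q) i j := by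
      funext q; rw [Matrix.nonsing_inv_eq_ringInverse]
    rw [heq]
    exact h
  · -- the transport equation
    have hmain : deriv (fun t' => Ring.inverse (Bf (s, t', x)) i j) t
          + (1 / We) * deriv (fun s' => Ring.inverse (Bf (s', t, x)) i j) s
          + ∑ k : Fin d, u t x k *
              fderiv ℝ (fun x' => Ring.inverse (Bf (s, t, x')) i j) x (Pi.single k 1)
        = ((entryCLM d i j).comp D) w0 :=
      hOp (fun q => Ring.inverse (Bf q) i j) ((entryCLM d i j).comp D) hφ
    have hDw0 : D w0 = -(C * (L w0) * C) := by
      rw [hDdef]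
      rfl
    have hfinal : -(C * (L w0) * C)
        = -(C * (gradVF (u t) x)ᵀ) - gradVF (u t) x * C := by
      rw [hDBw]
      have : C * ((gradVF (u t) x)ᵀ * Bf (s, t, x) + Bf (s, t, x) * gradVF (u t) x) * C
          = C * (gradVF (u t) x)ᵀ * (Bf (s, t, x) * C)
            + (C * Bf (s, t, x)) * (gradVF (u t) x * C) := by
        noncomm_ring
      rw [this, hBC, hCB, mul_one, one_mul, neg_add, ← sub_eq_add_neg]
    calc deriv (fun t' => ((G s t' x)ᵀ * G s t' x)⁻¹ i j) t
          + (1 / We) * deriv (fun s' => ((G s' t x)ᵀ * G s' t x)⁻¹ i j) s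
          + ∑ k : Fin d, u t x k *
              fderiv ℝ (fun x' => ((G s t x')ᵀ * G s t x')⁻¹ i j) x (Pi.single k 1)
        = deriv (fun t' => Ring.inverse (Bf (s, t', x)) i j) t
          + (1 / We) * deriv (fun s' => Ring.inverse (Bf (s', t, x)) i j) s
          + ∑ k : Fin d, u t x k *
              fderiv ℝ (fun x' => Ring.inverse (Bf (s, t, x')) i j) x (Pi.single k 1) := by
          simp only [Matrix.nonsing_inv_eq_ringInverse]
          rfl
      _ = ((entryCLM d i j).comp D) w0 := hmain
      _ = (D w0) i j := rfl
      _ = (-(C * (gradVF (u t) x)ᵀ) - gradVF (u t) x * C) i j := by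
          rw [hDw0, hfinal]
      _ = (-(((G s t x)ᵀ * G s t x)⁻¹ * (gradVF (u t) x)ᵀ)
            - gradVF (u t) x * ((G s t x)ᵀ * G s t x)⁻¹) i j := by
          rw [Matrix.nonsing_inv_eq_ringInverse, hRI]
end

section
/- Let 𝔚𝔢 > 0, ω ∈ ℝ, Ω ⊆ ℝᵈ open, and u : ℝ × Ω → ℝᵈ continuously differentiable. Suppose B : [0,∞) × ℝ × Ω → M_d(ℝ) is continuously differentiable, satisfies ∂_t B + (1/𝔚𝔢) ∂_s B + (u·∇)B = B·∇u + (∇u)ᵀ·B pointwise and B(0,t,x) = 𝟙 for all (t,x). Define τ(t,x) = (ω/𝔚𝔢) ∫₀^∞ e^{−s}(B(s,t,x) − 𝟙) ds, and assume: (i) for each (t,x) the functions s ↦ e^{−s}(B(s,t,x) − 𝟙), s ↦ e^{−s}∂_t B(s,t,x), s ↦ e^{−s}∂_s B(s,t,x) and s ↦ e^{−s}∂_{x_k}B(s,t,x) (k = 1,…,d) are integrable on (0,∞), with domination allowing differentiation under the integral sign in t and x; (ii) e^{−s}(B(s,t,x) − 𝟙) → 0 as s → ∞ for each (t,x). Then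 τ is differentiable and satisfies the Upper Convected Maxwell equation 𝔚𝔢(∂_t τ + (u·∇)τ − (∇u)ᵀ·τ − τ·∇u) + τ = 2ω·Du pointwise, where Du = (∇u + (∇u)ᵀ)/2. -/
open Matrix MeasureTheory Filter

/-- if the Finger tensor `B(s,t,x)` is `C¹`, satisfies the transport
equation `∂_t B + (1/𝔚𝔢)∂_s B + (u·∇)B = B·∇u + (∇u)ᵀ·B` with `B(0,t,x) = 𝟙`, and the
stress `τ(t,x) = (ω/𝔚𝔢)∫₀^∞ e^{−s}(B(s,t,x) − 𝟙) ds` is defined with integrands that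
are integrable and admit differentiation under the integral sign in `t` and `x`, and
`e^{−s}(B − 𝟙) → 0` as `s → ∞`, then `τ` is differentiable and satisfies the Upper
Convected Maxwell equation
`𝔚𝔢(∂_t τ + (u·∇)τ − (∇u)ᵀ·τ − τ·∇u) + τ = 2ω·Du` with `Du = (∇u + (∇u)ᵀ)/2`. -/
theorem upper_convected_maxwell (d : ℕ) (We ω : ℝ) (hWe : 0 < We)
    (Ω : Set (Fin d → ℝ)) (hΩ : IsOpen Ω)
    (u : ℝ → (Fin d → ℝ) → (Fin d → ℝ))
    (hu : ContDiff ℝ 1 (fun p : ℝ × (Fin d → ℝ) => u p.1 p.2))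
    (B : ℝ → ℝ → (Fin d → ℝ) → Matrix (Fin d) (Fin d) ℝ)
    (hB : ∀ (s t : ℝ) (x : Fin d → ℝ), 0 ≤ s → x ∈ Ω → ∀ i j : Fin d,
      ContDiffAt ℝ 1
        (fun q : ℝ × ℝ × (Fin d → ℝ) => B q.1 q.2.1 q.2.2 i j) (s, t, x))
    (hPDE : ∀ (s t : ℝ) (x : Fin d → ℝ), 0 ≤ s → x ∈ Ω → ∀ i j : Fin d,
      deriv (fun t' => B s t' x i j) t
          + (1 / We) * deriv (fun s' => B s' t x i j) s
          + ∑ k : Fin d, u t x k *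
              fderiv ℝ (fun x' => B s t x' i j) x (Pi.single k 1)
        = (B s t x * gradVF (u t) x + (gradVF (u t) x)ᵀ * B s t x) i j)
    (hB0 : ∀ (t : ℝ) (x : Fin d → ℝ), B 0 t x = 1)
    (τ : ℝ → (Fin d → ℝ) → Matrix (Fin d) (Fin d) ℝ)
    (hτ : ∀ (t : ℝ) (x : Fin d → ℝ) (i j : Fin d),
      τ t x i j = (ω / We) * ∫ s in Set.Ioi (0 : ℝ),
        Real.exp (-s) * (B s t x i j - (1 : Matrix (Fin d) (Fin d) ℝ) i j))
    -- (i) integrability of the integrands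
    (hint0 : ∀ (t : ℝ), ∀ x ∈ Ω, ∀ i j : Fin d, IntegrableOn
      (fun s => Real.exp (-s) * (B s t x i j - (1 : Matrix (Fin d) (Fin d) ℝ) i j))
      (Set.Ioi (0 : ℝ)))
    (hint1 : ∀ (t : ℝ), ∀ x ∈ Ω, ∀ i j : Fin d, IntegrableOn
      (fun s => Real.exp (-s) * deriv (fun t' => B s t' x i j) t) (Set.Ioi (0 : ℝ)))
    (hint2 : ∀ (t : ℝ), ∀ x ∈ Ω, ∀ i j : Fin d, IntegrableOn
      (fun s => Real.exp (-s) * deriv (fun s' => B s' t x i j) s) (Set.Ioi (0 : ℝ)))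
    (hint3 : ∀ (t : ℝ), ∀ x ∈ Ω, ∀ i j k : Fin d, IntegrableOn
      (fun s => Real.exp (-s) * fderiv ℝ (fun x' => B s t x' i j) x (Pi.single k 1))
      (Set.Ioi (0 : ℝ)))
    -- (i) domination allowing differentiation under the integral sign in `t`
    (hswap_t : ∀ (t : ℝ), ∀ x ∈ Ω, ∀ i j : Fin d,
      HasDerivAt (fun t' => ∫ s in Set.Ioi (0 : ℝ),
          Real.exp (-s) * (B s t' x i j - (1 : Matrix (Fin d) (Fin d) ℝ) i j))
        (∫ s in Set.Ioi (0 : ℝ),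
          Real.exp (-s) * deriv (fun t' => B s t' x i j) t) t)
    -- (i) domination allowing differentiation under the integral sign in `x`
    (hswap_x : ∀ (t : ℝ), ∀ x ∈ Ω, ∀ i j : Fin d,
      DifferentiableAt ℝ (fun x' => ∫ s in Set.Ioi (0 : ℝ),
          Real.exp (-s) * (B s t x' i j - (1 : Matrix (Fin d) (Fin d) ℝ) i j)) x ∧
      ∀ k : Fin d,
        fderiv ℝ (fun x' => ∫ s in Set.Ioi (0 : ℝ),
            Real.exp (-s) * (B s t x' i j - (1 : Matrix (Fin d) (Fin d) ℝ) i j)) x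
          (Pi.single k 1)
        = ∫ s in Set.Ioi (0 : ℝ),
            Real.exp (-s) * fderiv ℝ (fun x' => B s t x' i j) x (Pi.single k 1))
    -- (ii) decay at infinity
    (hdecay : ∀ (t : ℝ), ∀ x ∈ Ω, ∀ i j : Fin d,
      Tendsto (fun s =>
          Real.exp (-s) * (B s t x i j - (1 : Matrix (Fin d) (Fin d) ℝ) i j))
        atTop (nhds 0)) :
    ∀ (t : ℝ), ∀ x ∈ Ω, ∀ i j : Fin d,
      (DifferentiableAt ℝ (fun t' => τ t' x i j) t ∧
        DifferentiableAt ℝ (fun x' => τ t x' i j) x) ∧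
      We * (deriv (fun t' => τ t' x i j) t
            + ∑ k : Fin d, u t x k *
                fderiv ℝ (fun x' => τ t x' i j) x (Pi.single k 1)
            - ((gradVF (u t) x)ᵀ * τ t x) i j
            - (τ t x * gradVF (u t) x) i j)
          + τ t x i j
        = 2 * ω *
            (((2 : ℝ)⁻¹ • (gradVF (u t) x + (gradVF (u t) x)ᵀ)) i j) := by
  intro t x hx i j
  have hWne : We ≠ 0 := ne_of_gt hWe
  set M : Matrix (Fin d) (Fin d) ℝ := gradVF (u t) x with hMdef
  -- entrywise integral of e^{-s}(B - 1)
  set P : Fin d → Fin d → ℝ := fun a b => ∫ s in Set.Ioi (0 : ℝ),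
    Real.exp (-s) * (B s t x a b - (1 : Matrix (Fin d) (Fin d) ℝ) a b) with hPdef
  have hτP : ∀ a b : Fin d, τ t x a b = (ω / We) * P a b := fun a b => hτ t x a b
  -- time derivative
  set T : ℝ := ∫ s in Set.Ioi (0 : ℝ),
    Real.exp (-s) * deriv (fun t' => B s t' x i j) t with hTdef
  have hteq : (fun t' => τ t' x i j)
      = fun t' => (ω / We) * ∫ s in Set.Ioi (0 : ℝ),
          Real.exp (-s) * (B s t' x i j - (1 : Matrix (Fin d) (Fin d) ℝ) i j) :=
    funext fun t' => hτ t' x i j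
  have hdt : HasDerivAt (fun t' => τ t' x i j) ((ω / We) * T) t := by
    rw [hteq]
    exact (hswap_t t x hx i j).const_mul (ω / We)
  -- space derivative
  obtain ⟨hdx0, hfdx0⟩ := hswap_x t x hx i j
  have hxeq : (fun x' => τ t x' i j)
      = fun x' => (ω / We) * ∫ s in Set.Ioi (0 : ℝ),
          Real.exp (-s) * (B s t x' i j - (1 : Matrix (Fin d) (Fin d) ℝ) i j) :=
    funext fun x' => hτ t x' i j
  have hdx : DifferentiableAt ℝ (fun x' => τ t x' i j) x := by
    rw [hxeq]; exact hdx0.const_mul _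
  set X : Fin d → ℝ := fun k => ∫ s in Set.Ioi (0 : ℝ),
    Real.exp (-s) * fderiv ℝ (fun x' => B s t x' i j) x (Pi.single k 1) with hXdef
  have hfdx : ∀ k : Fin d,
      fderiv ℝ (fun x' => τ t x' i j) x (Pi.single k 1) = (ω / We) * X k := by
    intro k
    rw [hxeq, fderiv_const_mul hdx0]
    simp [hfdx0 k, hXdef]
  refine ⟨⟨hdt.differentiableAt, hdx⟩, ?_⟩
  -- integration by parts in s
  have hbd : ∀ s : ℝ, 0 ≤ s →
      HasDerivAt (fun s' => B s' t x i j) (deriv (fun s' => B s' t x i j) s) s := by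
    intro s hs
    have h2 := (hB s t x hs hx i j).differentiableAt one_ne_zero
    have h3 : DifferentiableAt ℝ (fun s' : ℝ => ((s', (t, x)) : ℝ × ℝ × (Fin d → ℝ))) s :=
      differentiableAt_id.prodMk (differentiableAt_const _)
    exact (h2.comp s h3).hasDerivAt
  have hg : ∀ s ∈ Set.Ici (0 : ℝ),
      HasDerivAt
        (fun s' => Real.exp (-s') * (B s' t x i j - (1 : Matrix (Fin d) (Fin d) ℝ) i j))
        ((fun s => -(Real.exp (-s) * (B s t x i j - (1 : Matrix (Fin d) (Fin d) ℝ) i j))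
            + Real.exp (-s) * deriv (fun s' => B s' t x i j) s) s) s := by
    intro s hs
    have he : HasDerivAt (fun s' : ℝ => Real.exp (-s')) (Real.exp (-s) * (-1)) s :=
      ((hasDerivAt_id s).neg).exp
    have : HasDerivAt
        (fun s' => Real.exp (-s') * (B s' t x i j - (1 : Matrix (Fin d) (Fin d) ℝ) i j))
        (Real.exp (-s) * (-1) * (B s t x i j - (1 : Matrix (Fin d) (Fin d) ℝ) i j)
          + Real.exp (-s) * deriv (fun s' => B s' t x i j) s) s := he.fun_mul ((hbd s hs).sub_const ((1 : Matrix (Fin d) (Fin d) ℝ) i j))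
    convert this using 1
    ring
  have hneg : IntegrableOn
      (fun s => -(Real.exp (-s) * (B s t x i j - (1 : Matrix (Fin d) (Fin d) ℝ) i j)))
      (Set.Ioi (0 : ℝ)) := (hint0 t x hx i j).neg
  have hintIBP : IntegrableOn
      (fun s => -(Real.exp (-s) * (B s t x i j - (1 : Matrix (Fin d) (Fin d) ℝ) i j))
        + Real.exp (-s) * deriv (fun s' => B s' t x i j) s) (Set.Ioi (0 : ℝ)) :=
    hneg.add (hint2 t x hx i j)
  have hibp := integral_Ioi_of_hasDerivAt_of_tendsto' hg hintIBP (hdecay t x hx i j)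
  have hf0 : Real.exp (-(0:ℝ)) * (B 0 t x i j - (1 : Matrix (Fin d) (Fin d) ℝ) i j) = 0 := by
    rw [hB0 t x]; simp
  rw [hf0, sub_zero,
    integral_add hneg (hint2 t x hx i j),
    integral_neg] at hibp
  have key : (∫ s in Set.Ioi (0 : ℝ),
      Real.exp (-s) * deriv (fun s' => B s' t x i j) s) = P i j := by
    have := hibp
    simp only [hPdef] at *
    linarith
  -- integrate the PDE against e^{-s}
  have hexpint : IntegrableOn (fun s : ℝ => Real.exp (-s)) (Set.Ioi (0 : ℝ)) := by
    have := exp_neg_integrableOn_Ioi (0 : ℝ) (by norm_num : (0:ℝ) < 1)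
    simpa using this
  have e1 : (∫ s in Set.Ioi (0 : ℝ),
        (Real.exp (-s) * deriv (fun t' => B s t' x i j) t
          + ((1 / We) * (Real.exp (-s) * deriv (fun s' => B s' t x i j) s)
            + ∑ k : Fin d, u t x k *
                (Real.exp (-s) * fderiv ℝ (fun x' => B s t x' i j) x (Pi.single k 1)))))
      = ∫ s in Set.Ioi (0 : ℝ),
        ((∑ k : Fin d, M k j *
            (Real.exp (-s) * (B s t x i k - (1 : Matrix (Fin d) (Fin d) ℝ) i k))
          + Real.exp (-s) * M i j)
        + (∑ k : Fin d, Mᵀ i k *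
            (Real.exp (-s) * (B s t x k j - (1 : Matrix (Fin d) (Fin d) ℝ) k j))
          + Real.exp (-s) * Mᵀ i j)) := by
    apply setIntegral_congr_fun measurableSet_Ioi
    intro s hs
    dsimp only
    have h := hPDE s t x (le_of_lt hs) hx i j
    have hlhs : Real.exp (-s) * (deriv (fun t' => B s t' x i j) t
          + (1 / We) * deriv (fun s' => B s' t x i j) s
          + ∑ k : Fin d, u t x k *
              fderiv ℝ (fun x' => B s t x' i j) x (Pi.single k 1))
        = Real.exp (-s) * deriv (fun t' => B s t' x i j) t
          + ((1 / We) * (Real.exp (-s) * deriv (fun s' => B s' t x i j) s)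
            + ∑ k : Fin d, u t x k *
                (Real.exp (-s) * fderiv ℝ (fun x' => B s t x' i j) x (Pi.single k 1))) := by
      rw [mul_add, mul_add, Finset.mul_sum, add_assoc]
      congr 1
      congr 1
      · ring
      · exact Finset.sum_congr rfl fun k _ => by ring
    have hrhs : Real.exp (-s) * ((B s t x * M + Mᵀ * B s t x) i j)
        = (∑ k : Fin d, M k j *
            (Real.exp (-s) * (B s t x i k - (1 : Matrix (Fin d) (Fin d) ℝ) i k))
          + Real.exp (-s) * M i j)
        + (∑ k : Fin d, Mᵀ i k *
            (Real.exp (-s) * (B s t x k j - (1 : Matrix (Fin d) (Fin d) ℝ) k j))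
          + Real.exp (-s) * Mᵀ i j) := by
      have hM1 : M i j = ∑ k : Fin d, (1 : Matrix (Fin d) (Fin d) ℝ) i k * M k j := by
        rw [← Matrix.mul_apply, Matrix.one_mul]
      have hN1 : Mᵀ i j = ∑ k : Fin d, Mᵀ i k * (1 : Matrix (Fin d) (Fin d) ℝ) k j := by
        rw [← Matrix.mul_apply, Matrix.mul_one]
      rw [Matrix.add_apply, Matrix.mul_apply, Matrix.mul_apply]
      calc Real.exp (-s) * ((∑ k : Fin d, B s t x i k * M k j)
              + ∑ k : Fin d, Mᵀ i k * B s t x k j)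
          = (∑ k : Fin d, (M k j *
                (Real.exp (-s) * (B s t x i k - (1 : Matrix (Fin d) (Fin d) ℝ) i k))
              + Real.exp (-s) * ((1 : Matrix (Fin d) (Fin d) ℝ) i k * M k j)))
            + ∑ k : Fin d, (Mᵀ i k *
                (Real.exp (-s) * (B s t x k j - (1 : Matrix (Fin d) (Fin d) ℝ) k j))
              + Real.exp (-s) * (Mᵀ i k * (1 : Matrix (Fin d) (Fin d) ℝ) k j)) := by
            rw [mul_add, Finset.mul_sum, Finset.mul_sum]
            congr 1
            · exact Finset.sum_congr rfl fun k _ => by ring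
            · exact Finset.sum_congr rfl fun k _ => by ring
        _ = _ := by
            rw [Finset.sum_add_distrib, Finset.sum_add_distrib,
              ← Finset.mul_sum, ← Finset.mul_sum, hM1, hN1]
    rw [← hlhs, h, hrhs]
  -- split both integrals
  have hintL1 := hint1 t x hx i j
  have hintL2 : IntegrableOn
      (fun s => (1 / We) * (Real.exp (-s) * deriv (fun s' => B s' t x i j) s))
      (Set.Ioi (0 : ℝ)) := (hint2 t x hx i j).const_mul (1 / We)
  have hintL3 : IntegrableOn
      (fun s => ∑ k : Fin d, u t x k *
        (Real.exp (-s) * fderiv ℝ (fun x' => B s t x' i j) x (Pi.single k 1)))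
      (Set.Ioi (0 : ℝ)) :=
    integrable_finset_sum _ fun k _ => (hint3 t x hx i j k).const_mul (u t x k)
  have hintR1 : IntegrableOn
      (fun s => ∑ k : Fin d, M k j *
        (Real.exp (-s) * (B s t x i k - (1 : Matrix (Fin d) (Fin d) ℝ) i k)))
      (Set.Ioi (0 : ℝ)) :=
    integrable_finset_sum _ fun k _ => (hint0 t x hx i k).const_mul (M k j)
  have hintR2 : IntegrableOn (fun s : ℝ => Real.exp (-s) * M i j) (Set.Ioi (0 : ℝ)) :=
    hexpint.mul_const _
  have hintR3 : IntegrableOn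
      (fun s => ∑ k : Fin d, Mᵀ i k *
        (Real.exp (-s) * (B s t x k j - (1 : Matrix (Fin d) (Fin d) ℝ) k j)))
      (Set.Ioi (0 : ℝ)) :=
    integrable_finset_sum _ fun k _ => (hint0 t x hx k j).const_mul (Mᵀ i k)
  have hintR4 : IntegrableOn (fun s : ℝ => Real.exp (-s) * Mᵀ i j) (Set.Ioi (0 : ℝ)) :=
    hexpint.mul_const _
  have hintL23 : IntegrableOn
      (fun s => (1 / We) * (Real.exp (-s) * deriv (fun s' => B s' t x i j) s)
        + ∑ k : Fin d, u t x k *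
          (Real.exp (-s) * fderiv ℝ (fun x' => B s t x' i j) x (Pi.single k 1)))
      (Set.Ioi (0 : ℝ)) := hintL2.add hintL3
  have hintR12 : IntegrableOn
      (fun s => (∑ k : Fin d, M k j *
          (Real.exp (-s) * (B s t x i k - (1 : Matrix (Fin d) (Fin d) ℝ) i k)))
        + Real.exp (-s) * M i j) (Set.Ioi (0 : ℝ)) := hintR1.add hintR2
  have hintR34 : IntegrableOn
      (fun s => (∑ k : Fin d, Mᵀ i k *
          (Real.exp (-s) * (B s t x k j - (1 : Matrix (Fin d) (Fin d) ℝ) k j)))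
        + Real.exp (-s) * Mᵀ i j) (Set.Ioi (0 : ℝ)) := hintR3.add hintR4
  rw [integral_add hintL1 hintL23, integral_add hintL2 hintL3,
    integral_add hintR12 hintR34,
    integral_add hintR1 hintR2, integral_add hintR3 hintR4,
    integral_finset_sum _ (fun k _ => (hint3 t x hx i j k).const_mul (u t x k)),
    integral_finset_sum _ (fun k _ => (hint0 t x hx i k).const_mul (M k j)),
    integral_finset_sum _ (fun k _ => (hint0 t x hx k j).const_mul (Mᵀ i k))] at e1
  simp only [MeasureTheory.integral_const_mul, MeasureTheory.integral_mul_const] at e1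
  rw [integral_exp_neg_Ioi_zero, key] at e1
  -- e1 : T + ((1/We) * P i j + ∑ u_k X_k) = (∑ M k j * P i k + 1 * M i j) + (∑ Mᵀ i k * P k j + 1 * Mᵀ i j)
  -- now the final algebra
  have hτM : (τ t x * M) i j = (ω / We) * ∑ k : Fin d, P i k * M k j := by
    rw [Matrix.mul_apply, Finset.mul_sum]
    apply Finset.sum_congr rfl
    intro k _
    rw [hτP i k]; ring
  have hMτ : (Mᵀ * τ t x) i j = (ω / We) * ∑ k : Fin d, Mᵀ i k * P k j := by
    rw [Matrix.mul_apply, Finset.mul_sum]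
    apply Finset.sum_congr rfl
    intro k _
    rw [hτP k j]; ring
  have hsumu : (∑ k : Fin d, u t x k * fderiv ℝ (fun x' => τ t x' i j) x (Pi.single k 1))
      = (ω / We) * ∑ k : Fin d, u t x k * X k := by
    rw [Finset.mul_sum]
    apply Finset.sum_congr rfl
    intro k _
    rw [hfdx k]; ring
  rw [hdt.deriv, hsumu, hMτ, hτM, hτP i j]
  have hrhs2 : 2 * ω * (((2 : ℝ)⁻¹ • (M + Mᵀ)) i j) = ω * (M i j + Mᵀ i j) := by
    simp [Matrix.smul_apply, Matrix.add_apply]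
    ring
  rw [hrhs2]
  have e2 : We * T + P i j + We * (∑ k : Fin d, u t x k * X k)
      = We * ((∑ k : Fin d, M k j * P i k + M i j)
          + (∑ k : Fin d, Mᵀ i k * P k j + Mᵀ i j)) := by
    have hc2 : We * (1 / We) = 1 := by field_simp
    simp only [hTdef, hXdef, hPdef]
    linear_combination We * e1 - (∫ s in Set.Ioi (0:ℝ),
      Real.exp (-s) * (B s t x i j - (1 : Matrix (Fin d) (Fin d) ℝ) i j)) * hc2
  have hMswap : (∑ k : Fin d, M k j * P i k) = ∑ k : Fin d, P i k * M k j :=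
    Finset.sum_congr rfl fun k _ => mul_comm _ _
  rw [hMswap] at e2
  have hc : We * (ω / We) = ω := by field_simp
  linear_combination (ω / We) * e2 + (M i j + Mᵀ i j) * hc
end

section
/- Let 𝔚𝔢 > 0, ω ∈ ℝ, Ω ⊆ ℝᵈ open, and u : ℝ × Ω → ℝᵈ continuously differentiable. Suppose C : [0,∞) × ℝ × Ω → M_d(ℝ) is continuously differentiable, satisfies ∂_t C + (1/𝔚𝔢) ∂_s C + (u·∇)C = −C·(∇u)ᵀ − (∇u)·C pointwise and C(0,t,x) = 𝟙 for all (t,x). Define τ(t,x) = (ω/𝔚𝔢) ∫₀^∞ e^{−s}(𝟙 − C(s,t,x)) ds, and assume: (i) for each (t,x) the functions s ↦ e^{−s}(𝟙 − C(s,t,x)), s ↦ e^{−s}∂_t C(s,t,x), s ↦ e^{−s}∂_s C(s,t,x) and s ↦ e^{−s}∂_{x_k}C(s,t,x) (k = 1,…,d) are integrable on (0,∞), with domination allowing differentiation under the integral sign in t and x; (ii) e^{−s}(𝟙 − C(s,t,x)) → 0 as s → ∞ for each (t,x). Then τ is differentiable and satisfies the Lower Convected Maxwell equation 𝔚𝔢(∂_t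 τ + (u·∇)τ + τ·(∇u)ᵀ + (∇u)·τ) + τ = 2ω·Du pointwise, where Du = (∇u + (∇u)ᵀ)/2. -/
open Matrix MeasureTheory Filter

private lemma lcm_aux2 {d : ℕ} (e : ℝ) (f g : Fin d → ℝ) :
    e * ∑ k, f k * g k = ∑ k, f k * (e * g k) := by
  rw [Finset.mul_sum]
  exact Finset.sum_congr rfl fun k _ => by ring

private lemma lcm_aux {d : ℕ} (e : ℝ) (a b c f : Fin d → ℝ) :
    e * (-(∑ k, a k * b k) - ∑ k, c k * f k)
      = ∑ k, ((-(b k)) * (e * a k) + (-(c k)) * (e * f k)) := by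
  have h1 : ∀ k : Fin d, (-(b k)) * (e * a k) + (-(c k)) * (e * f k)
      = -(e * (a k * b k)) + -(e * (c k * f k)) := fun k => by ring
  rw [Finset.sum_congr rfl fun k _ => h1 k, Finset.sum_add_distrib,
    Finset.sum_neg_distrib, Finset.sum_neg_distrib, ← Finset.mul_sum, ← Finset.mul_sum]
  ring

/-- if the Cauchy–Green tensor `C(s,t,x)` is `C¹`, satisfies the
transport equation `∂_t C + (1/𝔚𝔢)∂_s C + (u·∇)C = −C·(∇u)ᵀ − (∇u)·C` with
`C(0,t,x) = 𝟙`, and the stress `τ(t,x) = (ω/𝔚𝔢)∫₀^∞ e^{−s}(𝟙 − C(s,t,x)) ds` is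
defined with integrands that are integrable and admit differentiation under the
integral sign in `t` and `x`, and `e^{−s}(𝟙 − C) → 0` as `s → ∞`, then `τ` is
differentiable and satisfies the Lower Convected Maxwell equation
`𝔚𝔢(∂_t τ + (u·∇)τ + τ·(∇u)ᵀ + (∇u)·τ) + τ = 2ω·Du` with `Du = (∇u + (∇u)ᵀ)/2`. -/
theorem lower_convected_maxwell (d : ℕ) (We ω : ℝ) (hWe : 0 < We)
    (Ω : Set (Fin d → ℝ)) (hΩ : IsOpen Ω)
    (u : ℝ → (Fin d → ℝ) → (Fin d → ℝ))
    (hu : ContDiff ℝ 1 (fun p : ℝ × (Fin d → ℝ) => u p.1 p.2))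
    (C : ℝ → ℝ → (Fin d → ℝ) → Matrix (Fin d) (Fin d) ℝ)
    (hC : ∀ (s t : ℝ) (x : Fin d → ℝ), 0 ≤ s → x ∈ Ω → ∀ i j : Fin d,
      ContDiffAt ℝ 1
        (fun q : ℝ × ℝ × (Fin d → ℝ) => C q.1 q.2.1 q.2.2 i j) (s, t, x))
    (hPDE : ∀ (s t : ℝ) (x : Fin d → ℝ), 0 ≤ s → x ∈ Ω → ∀ i j : Fin d,
      deriv (fun t' => C s t' x i j) t
          + (1 / We) * deriv (fun s' => C s' t x i j) s
          + ∑ k : Fin d, u t x k *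
              fderiv ℝ (fun x' => C s t x' i j) x (Pi.single k 1)
        = (-(C s t x * (gradVF (u t) x)ᵀ) - gradVF (u t) x * C s t x) i j)
    (hC0 : ∀ (t : ℝ) (x : Fin d → ℝ), C 0 t x = 1)
    (τ : ℝ → (Fin d → ℝ) → Matrix (Fin d) (Fin d) ℝ)
    (hτ : ∀ (t : ℝ) (x : Fin d → ℝ) (i j : Fin d),
      τ t x i j = (ω / We) * ∫ s in Set.Ioi (0 : ℝ),
        Real.exp (-s) * ((1 : Matrix (Fin d) (Fin d) ℝ) i j - C s t x i j))
    -- (i) integrability of the integrands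
    (hint0 : ∀ (t : ℝ), ∀ x ∈ Ω, ∀ i j : Fin d, IntegrableOn
      (fun s => Real.exp (-s) * ((1 : Matrix (Fin d) (Fin d) ℝ) i j - C s t x i j))
      (Set.Ioi (0 : ℝ)))
    (hint1 : ∀ (t : ℝ), ∀ x ∈ Ω, ∀ i j : Fin d, IntegrableOn
      (fun s => Real.exp (-s) * deriv (fun t' => C s t' x i j) t) (Set.Ioi (0 : ℝ)))
    (hint2 : ∀ (t : ℝ), ∀ x ∈ Ω, ∀ i j : Fin d, IntegrableOn
      (fun s => Real.exp (-s) * deriv (fun s' => C s' t x i j) s) (Set.Ioi (0 : ℝ)))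
    (hint3 : ∀ (t : ℝ), ∀ x ∈ Ω, ∀ i j k : Fin d, IntegrableOn
      (fun s => Real.exp (-s) * fderiv ℝ (fun x' => C s t x' i j) x (Pi.single k 1))
      (Set.Ioi (0 : ℝ)))
    -- (i) domination allowing differentiation under the integral sign in `t`
    (hswap_t : ∀ (t : ℝ), ∀ x ∈ Ω, ∀ i j : Fin d,
      HasDerivAt (fun t' => ∫ s in Set.Ioi (0 : ℝ),
          Real.exp (-s) * ((1 : Matrix (Fin d) (Fin d) ℝ) i j - C s t' x i j))
        (∫ s in Set.Ioi (0 : ℝ),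
          Real.exp (-s) * -(deriv (fun t' => C s t' x i j) t)) t)
    -- (i) domination allowing differentiation under the integral sign in `x`
    (hswap_x : ∀ (t : ℝ), ∀ x ∈ Ω, ∀ i j : Fin d,
      DifferentiableAt ℝ (fun x' => ∫ s in Set.Ioi (0 : ℝ),
          Real.exp (-s) * ((1 : Matrix (Fin d) (Fin d) ℝ) i j - C s t x' i j)) x ∧
      ∀ k : Fin d,
        fderiv ℝ (fun x' => ∫ s in Set.Ioi (0 : ℝ),
            Real.exp (-s) * ((1 : Matrix (Fin d) (Fin d) ℝ) i j - C s t x' i j)) x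
          (Pi.single k 1)
        = ∫ s in Set.Ioi (0 : ℝ),
            Real.exp (-s) * -(fderiv ℝ (fun x' => C s t x' i j) x (Pi.single k 1)))
    -- (ii) decay at infinity
    (hdecay : ∀ (t : ℝ), ∀ x ∈ Ω, ∀ i j : Fin d,
      Tendsto (fun s =>
          Real.exp (-s) * ((1 : Matrix (Fin d) (Fin d) ℝ) i j - C s t x i j))
        atTop (nhds 0)) :
    ∀ (t : ℝ), ∀ x ∈ Ω, ∀ i j : Fin d,
      (DifferentiableAt ℝ (fun t' => τ t' x i j) t ∧
        DifferentiableAt ℝ (fun x' => τ t x' i j) x) ∧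
      We * (deriv (fun t' => τ t' x i j) t
            + ∑ k : Fin d, u t x k *
                fderiv ℝ (fun x' => τ t x' i j) x (Pi.single k 1)
            + (τ t x * (gradVF (u t) x)ᵀ) i j
            + (gradVF (u t) x * τ t x) i j)
          + τ t x i j
        = 2 * ω *
            (((2 : ℝ)⁻¹ • (gradVF (u t) x + (gradVF (u t) x)ᵀ)) i j) := by
  intro t x hx i j
  have hWe0 : We ≠ 0 := ne_of_gt hWe
  -- integrability of the exponential weight
  have hexp : IntegrableOn (fun s : ℝ => Real.exp (-s)) (Set.Ioi 0) := by
    simpa using exp_neg_integrableOn_Ioi 0 (by norm_num : (0:ℝ) < 1)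
  -- integrability of `e^{-s} C`
  have hintC : ∀ a b : Fin d,
      IntegrableOn (fun s => Real.exp (-s) * C s t x a b) (Set.Ioi (0:ℝ)) := by
    intro a b
    have h1 : IntegrableOn (fun s : ℝ => Real.exp (-s) * (1 : Matrix (Fin d) (Fin d) ℝ) a b
        - Real.exp (-s) * ((1 : Matrix (Fin d) (Fin d) ℝ) a b - C s t x a b))
        (Set.Ioi (0:ℝ)) :=
      (hexp.mul_const _).sub (hint0 t x hx a b)
    exact h1.congr_fun (fun s _ => by ring) measurableSet_Ioi
  -- the basic integral in terms of `∫ e^{-s} C`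
  have hJC : ∀ a b : Fin d,
      (∫ s in Set.Ioi (0:ℝ), Real.exp (-s) * ((1 : Matrix (Fin d) (Fin d) ℝ) a b - C s t x a b))
        = (1 : Matrix (Fin d) (Fin d) ℝ) a b
          - ∫ s in Set.Ioi (0:ℝ), Real.exp (-s) * C s t x a b := by
    intro a b
    have heq : (fun s : ℝ => Real.exp (-s) * ((1 : Matrix (Fin d) (Fin d) ℝ) a b - C s t x a b))
        = fun s => Real.exp (-s) * (1 : Matrix (Fin d) (Fin d) ℝ) a b
            - Real.exp (-s) * C s t x a b := by
      funext s; ring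
    rw [heq, integral_sub (hexp.mul_const _) (hintC a b), integral_mul_const,
      integral_exp_neg_Ioi_zero, one_mul]
  -- differentiability in `s`
  have hdiffs : ∀ s : ℝ, 0 ≤ s → DifferentiableAt ℝ (fun s' => C s' t x i j) s := by
    intro s hs
    have h := (hC s t x hs hx i j).differentiableAt one_ne_zero
    have h2 : DifferentiableAt ℝ (fun s' : ℝ => ((s', t, x) : ℝ × ℝ × (Fin d → ℝ))) s :=
      differentiableAt_id.prodMk (differentiableAt_const _)
    exact h.comp s h2
  -- integration by parts in `s`
  have hIBP : (∫ s in Set.Ioi (0:ℝ), Real.exp (-s) * deriv (fun s' => C s' t x i j) s)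
      = -(∫ s in Set.Ioi (0:ℝ),
          Real.exp (-s) * ((1 : Matrix (Fin d) (Fin d) ℝ) i j - C s t x i j)) := by
    set g : ℝ → ℝ :=
      fun s => Real.exp (-s) * (C s t x i j - (1 : Matrix (Fin d) (Fin d) ℝ) i j) with hgdef
    set g' : ℝ → ℝ := fun s => Real.exp (-s) * deriv (fun s' => C s' t x i j) s
        + Real.exp (-s) * ((1 : Matrix (Fin d) (Fin d) ℝ) i j - C s t x i j) with hg'def
    have hderiv : ∀ s ∈ Set.Ioi (0:ℝ), HasDerivAt g (g' s) s := by
      intro s hs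
      have he : HasDerivAt (fun s : ℝ => Real.exp (-s)) (-Real.exp (-s)) s := by
        simpa [Function.comp_def] using (Real.hasDerivAt_exp (-s)).comp s (hasDerivAt_neg s)
      have hc : HasDerivAt (fun s' => C s' t x i j - (1 : Matrix (Fin d) (Fin d) ℝ) i j)
          (deriv (fun s' => C s' t x i j) s) s :=
        ((hdiffs s (le_of_lt hs)).hasDerivAt).sub_const _
      have hval : g' s = -Real.exp (-s) * (C s t x i j - (1 : Matrix (Fin d) (Fin d) ℝ) i j)
          + Real.exp (-s) * deriv (fun s' => C s' t x i j) s := by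
        simp only [hg'def]; ring
      rw [hval]
      exact he.mul hc
    have hcont : ContinuousWithinAt g (Set.Ici (0:ℝ)) 0 := by
      have h1 : ContinuousAt (fun s' => C s' t x i j) 0 := (hdiffs 0 le_rfl).continuousAt
      exact (((Real.continuous_exp.comp continuous_neg).continuousAt).mul
        (h1.sub continuousAt_const)).continuousWithinAt
    have htend : Tendsto g atTop (nhds 0) := by
      have h1 := (hdecay t x hx i j).neg
      simp only [neg_zero] at h1
      have heq : (fun s => -(Real.exp (-s)
          * ((1 : Matrix (Fin d) (Fin d) ℝ) i j - C s t x i j))) = g := by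
        funext s; simp only [hgdef]; ring
      rwa [heq] at h1
    have hint_g' : IntegrableOn g' (Set.Ioi (0:ℝ)) :=
      (hint2 t x hx i j).add (hint0 t x hx i j)
    have h0 : (∫ s in Set.Ioi (0:ℝ), g' s) = 0 - g 0 :=
      integral_Ioi_of_hasDerivAt_of_tendsto hcont hderiv hint_g' htend
    have hg0 : g 0 = 0 := by simp [hgdef, hC0 t x]
    rw [hg0, sub_zero] at h0
    have hsplit : (∫ s in Set.Ioi (0:ℝ), g' s)
        = (∫ s in Set.Ioi (0:ℝ), Real.exp (-s) * deriv (fun s' => C s' t x i j) s)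
          + ∫ s in Set.Ioi (0:ℝ),
              Real.exp (-s) * ((1 : Matrix (Fin d) (Fin d) ℝ) i j - C s t x i j) := by
      simp only [hg'def]
      exact integral_add (hint2 t x hx i j) (hint0 t x hx i j)
    rw [hsplit] at h0
    linarith
  -- time derivative of τ
  have heqτt : (fun t' => τ t' x i j)
      = fun t' => (ω / We) * ∫ s in Set.Ioi (0:ℝ),
          Real.exp (-s) * ((1 : Matrix (Fin d) (Fin d) ℝ) i j - C s t' x i j) := by
    funext t'; exact hτ t' x i j
  have hτt : HasDerivAt (fun t' => τ t' x i j)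
      ((ω / We) * ∫ s in Set.Ioi (0:ℝ),
        Real.exp (-s) * -(deriv (fun t' => C s t' x i j) t)) t := by
    rw [heqτt]
    exact (hswap_t t x hx i j).const_mul (ω / We)
  have hItneg : (∫ s in Set.Ioi (0:ℝ), Real.exp (-s) * -(deriv (fun t' => C s t' x i j) t))
      = -(∫ s in Set.Ioi (0:ℝ), Real.exp (-s) * deriv (fun t' => C s t' x i j) t) := by
    simp only [mul_neg]
    exact integral_neg _
  have hderiv_val : deriv (fun t' => τ t' x i j) t
      = (ω / We) * -(∫ s in Set.Ioi (0:ℝ),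
          Real.exp (-s) * deriv (fun t' => C s t' x i j) t) := by
    rw [hτt.deriv, hItneg]
  -- space derivative of τ
  have heqτx : (fun x' => τ t x' i j)
      = fun x' => (ω / We) * ∫ s in Set.Ioi (0:ℝ),
          Real.exp (-s) * ((1 : Matrix (Fin d) (Fin d) ℝ) i j - C s t x' i j) := by
    funext x'; exact hτ t x' i j
  have hdiffx : DifferentiableAt ℝ (fun x' => τ t x' i j) x := by
    rw [heqτx]; exact ((hswap_x t x hx i j).1).const_mul (ω / We)
  have hfd : ∀ k : Fin d, fderiv ℝ (fun x' => τ t x' i j) x (Pi.single k 1)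
      = (ω / We) * -(∫ s in Set.Ioi (0:ℝ),
          Real.exp (-s) * fderiv ℝ (fun x' => C s t x' i j) x (Pi.single k 1)) := by
    intro k
    have h1 : fderiv ℝ (fun x' => τ t x' i j) x
        = (ω / We) • fderiv ℝ (fun x' => ∫ s in Set.Ioi (0:ℝ),
            Real.exp (-s) * ((1 : Matrix (Fin d) (Fin d) ℝ) i j - C s t x' i j)) x := by
      rw [heqτx]; exact fderiv_const_mul (hswap_x t x hx i j).1 (ω / We)
    rw [h1, ContinuousLinearMap.smul_apply, (hswap_x t x hx i j).2 k, smul_eq_mul]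
    congr 1
    simp only [mul_neg]
    exact integral_neg _
  -- integrated PDE identity
  have hsum_int : IntegrableOn (fun s => ∑ k : Fin d, u t x k *
      (Real.exp (-s) * fderiv ℝ (fun x' => C s t x' i j) x (Pi.single k 1)))
      (Set.Ioi (0:ℝ)) :=
    integrable_finset_sum _ fun k _ => (hint3 t x hx i j k).const_mul _
  have hAB : IntegrableOn (fun s => Real.exp (-s) * deriv (fun t' => C s t' x i j) t
      + (1 / We) * (Real.exp (-s) * deriv (fun s' => C s' t x i j) s)) (Set.Ioi (0:ℝ)) :=
    (hint1 t x hx i j).add ((hint2 t x hx i j).const_mul _)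
  have hkey : (∫ s in Set.Ioi (0:ℝ), Real.exp (-s) * deriv (fun t' => C s t' x i j) t)
      + (1 / We) * (∫ s in Set.Ioi (0:ℝ), Real.exp (-s) * deriv (fun s' => C s' t x i j) s)
      + (∑ k : Fin d, u t x k * ∫ s in Set.Ioi (0:ℝ),
          Real.exp (-s) * fderiv ℝ (fun x' => C s t x' i j) x (Pi.single k 1))
      = -(∑ k : Fin d, (∫ s in Set.Ioi (0:ℝ), Real.exp (-s) * C s t x i k)
            * gradVF (u t) x j k)
        - ∑ k : Fin d, gradVF (u t) x i k
            * ∫ s in Set.Ioi (0:ℝ), Real.exp (-s) * C s t x k j := by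
    have step1 : (∫ s in Set.Ioi (0:ℝ),
        (Real.exp (-s) * deriv (fun t' => C s t' x i j) t
          + (1 / We) * (Real.exp (-s) * deriv (fun s' => C s' t x i j) s)
          + ∑ k : Fin d, u t x k *
              (Real.exp (-s) * fderiv ℝ (fun x' => C s t x' i j) x (Pi.single k 1))))
        = (∫ s in Set.Ioi (0:ℝ), Real.exp (-s) * deriv (fun t' => C s t' x i j) t)
          + (1 / We) * (∫ s in Set.Ioi (0:ℝ), Real.exp (-s) * deriv (fun s' => C s' t x i j) s)
          + (∑ k : Fin d, u t x k * ∫ s in Set.Ioi (0:ℝ),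
              Real.exp (-s) * fderiv ℝ (fun x' => C s t x' i j) x (Pi.single k 1)) := by
      rw [integral_add hAB hsum_int,
        integral_add (hint1 t x hx i j) ((hint2 t x hx i j).const_mul _),
        integral_const_mul,
        integral_finset_sum _ (fun k _ => (hint3 t x hx i j k).const_mul _)]
      simp only [integral_const_mul]
    have hpt : ∀ s ∈ Set.Ioi (0:ℝ),
        (Real.exp (-s) * deriv (fun t' => C s t' x i j) t
          + (1 / We) * (Real.exp (-s) * deriv (fun s' => C s' t x i j) s)
          + ∑ k : Fin d, u t x k *
              (Real.exp (-s) * fderiv ℝ (fun x' => C s t x' i j) x (Pi.single k 1)))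
        = ∑ k : Fin d, ((-(gradVF (u t) x j k)) * (Real.exp (-s) * C s t x i k)
            + (-(gradVF (u t) x i k)) * (Real.exp (-s) * C s t x k j)) := by
      intro s hs
      have hp := hPDE s t x (le_of_lt hs) hx i j
      have e1 : Real.exp (-s) * (deriv (fun t' => C s t' x i j) t
          + 1 / We * deriv (fun s' => C s' t x i j) s
          + ∑ k : Fin d, u t x k * fderiv ℝ (fun x' => C s t x' i j) x (Pi.single k 1))
          = Real.exp (-s) * deriv (fun t' => C s t' x i j) t
            + (1 / We) * (Real.exp (-s) * deriv (fun s' => C s' t x i j) s)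
            + ∑ k : Fin d, u t x k *
                (Real.exp (-s) * fderiv ℝ (fun x' => C s t x' i j) x (Pi.single k 1)) := by
        rw [mul_add, mul_add, lcm_aux2]
        ring
      have e2 : Real.exp (-s)
          * ((-(C s t x * (gradVF (u t) x)ᵀ) - gradVF (u t) x * C s t x) i j)
          = ∑ k : Fin d, ((-(gradVF (u t) x j k)) * (Real.exp (-s) * C s t x i k)
              + (-(gradVF (u t) x i k)) * (Real.exp (-s) * C s t x k j)) := by
        simp only [Matrix.sub_apply, Matrix.neg_apply, Matrix.mul_apply,
          Matrix.transpose_apply]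
        exact lcm_aux _ _ _ _ _
      rw [← e1, hp, e2]
    have step2 : (∫ s in Set.Ioi (0:ℝ),
        (Real.exp (-s) * deriv (fun t' => C s t' x i j) t
          + (1 / We) * (Real.exp (-s) * deriv (fun s' => C s' t x i j) s)
          + ∑ k : Fin d, u t x k *
              (Real.exp (-s) * fderiv ℝ (fun x' => C s t x' i j) x (Pi.single k 1))))
        = ∫ s in Set.Ioi (0:ℝ),
            ∑ k : Fin d, ((-(gradVF (u t) x j k)) * (Real.exp (-s) * C s t x i k)
              + (-(gradVF (u t) x i k)) * (Real.exp (-s) * C s t x k j)) :=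
      setIntegral_congr_fun measurableSet_Ioi hpt
    have step3 : (∫ s in Set.Ioi (0:ℝ),
        ∑ k : Fin d, ((-(gradVF (u t) x j k)) * (Real.exp (-s) * C s t x i k)
          + (-(gradVF (u t) x i k)) * (Real.exp (-s) * C s t x k j)))
        = ∑ k : Fin d, ((-(gradVF (u t) x j k))
              * (∫ s in Set.Ioi (0:ℝ), Real.exp (-s) * C s t x i k)
            + (-(gradVF (u t) x i k))
              * ∫ s in Set.Ioi (0:ℝ), Real.exp (-s) * C s t x k j) := by
      rw [integral_finset_sum Finset.univ
        (f := fun k (s : ℝ) => (-(gradVF (u t) x j k)) * (Real.exp (-s) * C s t x i k)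
          + (-(gradVF (u t) x i k)) * (Real.exp (-s) * C s t x k j))
        (fun k _ => ((hintC i k).const_mul _).add ((hintC k j).const_mul _))]
      refine Finset.sum_congr rfl fun k _ => ?_
      rw [integral_add ((hintC i k).const_mul _) ((hintC k j).const_mul _),
        integral_const_mul, integral_const_mul]
    have step4 : (∑ k : Fin d, ((-(gradVF (u t) x j k))
          * (∫ s in Set.Ioi (0:ℝ), Real.exp (-s) * C s t x i k)
        + (-(gradVF (u t) x i k))
          * ∫ s in Set.Ioi (0:ℝ), Real.exp (-s) * C s t x k j))
        = -(∑ k : Fin d, (∫ s in Set.Ioi (0:ℝ), Real.exp (-s) * C s t x i k)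
              * gradVF (u t) x j k)
          - ∑ k : Fin d, gradVF (u t) x i k
              * ∫ s in Set.Ioi (0:ℝ), Real.exp (-s) * C s t x k j := by
      have h1 : ∀ k : Fin d, (-(gradVF (u t) x j k))
            * (∫ s in Set.Ioi (0:ℝ), Real.exp (-s) * C s t x i k)
          + (-(gradVF (u t) x i k))
            * (∫ s in Set.Ioi (0:ℝ), Real.exp (-s) * C s t x k j)
          = -((∫ s in Set.Ioi (0:ℝ), Real.exp (-s) * C s t x i k) * gradVF (u t) x j k)
            + -(gradVF (u t) x i k * ∫ s in Set.Ioi (0:ℝ), Real.exp (-s) * C s t x k j) :=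
        fun k => by ring
      rw [Finset.sum_congr rfl fun k _ => h1 k, Finset.sum_add_distrib,
        Finset.sum_neg_distrib, Finset.sum_neg_distrib]
      ring
    rw [← step1, step2, step3, step4]
  -- matrix product entries in terms of the basic integrals
  have htau1 : (τ t x * (gradVF (u t) x)ᵀ) i j
      = (ω / We) * (gradVF (u t) x j i
          - ∑ k : Fin d, (∫ s in Set.Ioi (0:ℝ), Real.exp (-s) * C s t x i k)
              * gradVF (u t) x j k) := by
    rw [Matrix.mul_apply]
    have h2 : ∀ k : Fin d, τ t x i k * (gradVF (u t) x)ᵀ k j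
        = (ω / We) * ((1 : Matrix (Fin d) (Fin d) ℝ) i k * gradVF (u t) x j k
            - (∫ s in Set.Ioi (0:ℝ), Real.exp (-s) * C s t x i k) * gradVF (u t) x j k) := by
      intro k
      rw [Matrix.transpose_apply, hτ t x i k, hJC i k]; ring
    rw [Finset.sum_congr rfl fun k _ => h2 k, ← Finset.mul_sum, Finset.sum_sub_distrib]
    congr 2
    simp [Matrix.one_apply]
  have htau2 : (gradVF (u t) x * τ t x) i j
      = (ω / We) * (gradVF (u t) x i j
          - ∑ k : Fin d, gradVF (u t) x i k
              * ∫ s in Set.Ioi (0:ℝ), Real.exp (-s) * C s t x k j) := by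
    rw [Matrix.mul_apply]
    have h2 : ∀ k : Fin d, gradVF (u t) x i k * τ t x k j
        = (ω / We) * (gradVF (u t) x i k * (1 : Matrix (Fin d) (Fin d) ℝ) k j
            - gradVF (u t) x i k
              * ∫ s in Set.Ioi (0:ℝ), Real.exp (-s) * C s t x k j) := by
      intro k
      rw [hτ t x k j, hJC k j]; ring
    rw [Finset.sum_congr rfl fun k _ => h2 k, ← Finset.mul_sum, Finset.sum_sub_distrib]
    congr 2
    simp [Matrix.one_apply]
  have hsum_u : (∑ k : Fin d, u t x k * fderiv ℝ (fun x' => τ t x' i j) x (Pi.single k 1))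
      = (ω / We) * -(∑ k : Fin d, u t x k * ∫ s in Set.Ioi (0:ℝ),
          Real.exp (-s) * fderiv ℝ (fun x' => C s t x' i j) x (Pi.single k 1)) := by
    have h2 : ∀ k : Fin d, u t x k * fderiv ℝ (fun x' => τ t x' i j) x (Pi.single k 1)
        = -((ω / We) * (u t x k * ∫ s in Set.Ioi (0:ℝ),
            Real.exp (-s) * fderiv ℝ (fun x' => C s t x' i j) x (Pi.single k 1))) := by
      intro k; rw [hfd k]; ring
    rw [Finset.sum_congr rfl fun k _ => h2 k, Finset.sum_neg_distrib, ← Finset.mul_sum]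
    ring
  refine ⟨⟨hτt.differentiableAt, hdiffx⟩, ?_⟩
  rw [hderiv_val, hsum_u, htau1, htau2, hτ t x i j, hJC i j]
  simp only [Matrix.smul_apply, Matrix.add_apply, Matrix.transpose_apply, smul_eq_mul]
  have hIT : (∫ s in Set.Ioi (0:ℝ), Real.exp (-s) * deriv (fun t' => C s t' x i j) t)
      = -(∑ k : Fin d, (∫ s in Set.Ioi (0:ℝ), Real.exp (-s) * C s t x i k)
            * gradVF (u t) x j k)
        - (∑ k : Fin d, gradVF (u t) x i k
            * ∫ s in Set.Ioi (0:ℝ), Real.exp (-s) * C s t x k j)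
        - (1 / We) * -((1 : Matrix (Fin d) (Fin d) ℝ) i j
            - ∫ s in Set.Ioi (0:ℝ), Real.exp (-s) * C s t x i j)
        - ∑ k : Fin d, u t x k * ∫ s in Set.Ioi (0:ℝ),
            Real.exp (-s) * fderiv ℝ (fun x' => C s t x' i j) x (Pi.single k 1) := by
    have h1 := hkey
    rw [hIBP, hJC i j] at h1
    linarith
  rw [hIT]
  field_simp
  ring
end
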